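/- Let Ω be a subset of a reflexive Banach space X, x̄ ∈ Ω, and Λ_w := T_w(x̄;Ω) the weak contingent cone. Then for any d ∈ Λ_w, any x* ∈ N̂(d;Λ_w), any sequences x_k ∈ Ω, t_k ↓ 0 with (x_k − x̄)/t_k → d weakly, and any ε > 0, there exists δ ∈ (0,ε) such that limsup_k sup{ ⟨x*, z − x_k⟩/t_k : z ∈ Ω ∩ (x_k + t_k δ 𝔹) } ≤ 2εδ. -/

import Mathlib

set_option maxHeartbeats 2000000
set_option synthInstance.maxHeartbeats 1000000


open Filter Topology Metric

variable {X : Type*} [NormedAddCommGroup X] [NormedSpace ℝ X]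

/-- `f` is a Fréchet `ε`-normal to `Ω` at `x₀`. -/
def IsEpsNormal (ε : ℝ) (f : X →L[ℝ] ℝ) (Ω : Set X) (x₀ : X) : Prop :=
  ∀ η > 0, ∃ δ > 0, ∀ x ∈ Ω, ‖x - x₀‖ < δ → f (x - x₀) ≤ (ε + η) * ‖x - x₀‖

/-- `f` is a Fréchet normal to `Ω` at `x₀`. -/
def IsFrechetNormal (f : X →L[ℝ] ℝ) (Ω : Set X) (x₀ : X) : Prop :=
  IsEpsNormal 0 f Ω x₀

/-- `f` is a Mordukhovich limiting normal to `Ω` at `x₀`: a weak* limit of Fréchet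
`ε_k`-normals at points `x_k → x₀` of `Ω` with `ε_k ↓ 0`. -/
def IsLimitingNormal (f : X →L[ℝ] ℝ) (Ω : Set X) (x₀ : X) : Prop :=
  ∃ (ε : ℕ → ℝ) (x : ℕ → X) (g : ℕ → X →L[ℝ] ℝ),
    (∀ k, 0 ≤ ε k) ∧ Tendsto ε atTop (𝓝 0) ∧
    (∀ k, x k ∈ Ω) ∧ Tendsto x atTop (𝓝 x₀) ∧
    (∀ v : X, Tendsto (fun k => g k v) atTop (𝓝 (f v))) ∧
    (∀ k, IsEpsNormal (ε k) (g k) Ω (x k))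

/-- The weak contingent cone `T_w(x₀;Ω)`. -/
def weakContingentCone (x₀ : X) (Ω : Set X) : Set X :=
  {v | ∃ (t : ℕ → ℝ) (w : ℕ → X), (∀ k, 0 < t k) ∧ Tendsto t atTop (𝓝 0) ∧
    (∀ f : X →L[ℝ] ℝ, Tendsto (fun k => f (w k)) atTop (𝓝 (f v))) ∧
    ∀ k, x₀ + t k • w k ∈ Ω}

/-- The reflexivity of the normed space `X`: the canonical embedding into the
double dual is surjective. -/
def IsReflexiveSpace (X : Type*) [NormedAddCommGroup X] [NormedSpace ℝ X] : Prop :=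
  Function.Surjective (NormedSpace.inclusionInDoubleDual ℝ X)

/-- `X` is an Asplund space: every separable subspace has a separable dual. -/
def IsAsplundSpace (X : Type*) [NormedAddCommGroup X] [NormedSpace ℝ X] : Prop :=
  ∀ Y : Subspace ℝ X, TopologicalSpace.SeparableSpace Y →
    TopologicalSpace.SeparableSpace (Y →L[ℝ] ℝ)

/-- The tangential approximate normality (TAN) property of `Ω` at `x₀`. -/
def TANProperty (Ω : Set X) (x₀ : X) : Prop :=
  ∀ d ∈ weakContingentCone x₀ Ω, ∀ f : X →L[ℝ] ℝ,
    IsFrechetNormal f (weakContingentCone x₀ Ω) d →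
    ∃ (t : ℕ → ℝ) (x : ℕ → X), (∀ k, 0 < t k) ∧ Tendsto t atTop (𝓝 0) ∧
      (∀ k, x k ∈ Ω) ∧
      (∀ g : X →L[ℝ] ℝ, Tendsto (fun k => g ((t k)⁻¹ • (x k - x₀))) atTop (𝓝 (g d))) ∧
      ∀ ε > 0, ∃ δ : ℝ, 0 < δ ∧ δ < ε ∧
        Filter.limsup (fun k =>
          sSup ((fun z => f (z - x k) / t k) '' (Ω ∩ closedBall (x k) (t k * δ))))
          atTop ≤ 2 * ε * δ


section AuxiliaryLemmas

open TopologicalSpace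

/-- Separation of a point from a closed submodule by a continuous linear functional. -/
lemma exists_dual_annihilator (Y : Submodule ℝ X) (hY : IsClosed (Y : Set X)) {x : X}
    (hx : x ∉ Y) : ∃ f : X →L[ℝ] ℝ, (∀ y ∈ Y, f y = 0) ∧ f x ≠ 0 := by
  obtain ⟨f, u, hfY, hux⟩ := geometric_hahn_banach_closed_point Y.convex hY hx
  have hu : 0 < u := by simpa using hfY 0 Y.zero_mem
  refine ⟨f, fun y hy => ?_, ne_of_gt (hu.trans hux)⟩
  by_contra hfy
  have h1 := hfY (((u + 1) / f y) • y) (Y.smul_mem _ hy)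
  rw [map_smul, smul_eq_mul, div_mul_cancel₀ _ hfy] at h1
  linarith

/-- If the dual of a normed space is separable, so is the space itself. -/
lemma separableSpace_of_dual_separableSpace
    (hsep : SeparableSpace (X →L[ℝ] ℝ)) : SeparableSpace X := by
  classical
  obtain ⟨φ, hφ⟩ := @TopologicalSpace.exists_dense_seq (X →L[ℝ] ℝ) _ hsep ⟨0⟩
  have hsel : ∀ n, ∃ z : X, ‖z‖ ≤ 1 ∧ (φ n ≠ 0 → ‖φ n‖ / 2 < ‖(φ n) z‖) := by
    intro n
    by_cases h : φ n = 0
    · exact ⟨0, by simp, fun hc => absurd h hc⟩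
    · have hn : 0 < ‖φ n‖ := norm_pos_iff.2 h
      obtain ⟨z, hz1, hz2⟩ := (φ n).exists_lt_apply_of_lt_opNorm (half_lt_self hn)
      exact ⟨z, hz1.le, fun _ => hz2⟩
  choose y hy1 hy2 using hsel
  set K := (Submodule.span ℝ (Set.range y)).topologicalClosure with hKdef
  have hyK : ∀ n, y n ∈ K :=
    fun n => (Submodule.span ℝ (Set.range y)).le_topologicalClosure
      (Submodule.subset_span (Set.mem_range_self n))
  have hdense : ∀ e : X, e ∈ K := by
    by_contra hne
    push_neg at hne
    obtain ⟨e, he⟩ := hne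
    obtain ⟨f, hf0, hfx⟩ :=
      exists_dual_annihilator K (Submodule.isClosed_topologicalClosure _) he
    have hfne : f ≠ 0 := by
      intro h0; exact hfx (by simp [h0])
    have hfn : 0 < ‖f‖ := norm_pos_iff.2 hfne
    obtain ⟨n, hn⟩ := hφ.exists_dist_lt f (by positivity : (0:ℝ) < ‖f‖ / 4)
    rw [dist_eq_norm] at hn
    have hn' : ‖φ n - f‖ < ‖f‖ / 4 := by rwa [norm_sub_rev] at hn
    have hnorm : ‖f‖ - ‖f‖ / 4 ≤ ‖φ n‖ := by
      have h1 : |‖φ n‖ - ‖f‖| ≤ ‖φ n - f‖ := abs_norm_sub_norm_le _ _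
      have h2 := abs_le.1 h1
      linarith [h2.1, hn'.le]
    have hφn0 : φ n ≠ 0 := by
      intro h0
      rw [h0, norm_zero] at hnorm
      linarith
    have hgt := hy2 n hφn0
    have hval : ‖(φ n) (y n)‖ ≤ ‖φ n - f‖ := by
      have : (φ n) (y n) = (φ n - f) (y n) := by
        simp [hf0 (y n) (hyK n)]
      rw [this]
      calc ‖(φ n - f) (y n)‖ ≤ ‖φ n - f‖ * ‖y n‖ := (φ n - f).le_opNorm _
        _ ≤ ‖φ n - f‖ * 1 := by
            exact mul_le_mul_of_nonneg_left (hy1 n) (norm_nonneg _)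
        _ = ‖φ n - f‖ := mul_one _
    linarith
  have hsepK : IsSeparable (K : Set X) := by
    rw [hKdef, Submodule.topologicalClosure_coe]
    exact ((Set.countable_range y).isSeparable.span).closure
  have huniv : IsSeparable (Set.univ : Set X) :=
    hsepK.mono fun e _ => hdense e
  exact isSeparable_univ_iff.1 huniv

/-- In a reflexive space, every element of the double dual of a closed subspace is
represented by a point of the subspace. -/
lemma exists_repr_of_reflexive (hrefl : IsReflexiveSpace X) (Y : Submodule ℝ X)
    (hY : IsClosed (Y : Set X)) (ψ : (↥Y →L[ℝ] ℝ) →L[ℝ] ℝ) :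
    ∃ v : Y, ∀ h : ↥Y →L[ℝ] ℝ, ψ h = h v := by
  have hsub : ∀ g : X →L[ℝ] ℝ, ‖g.comp Y.subtypeL‖ ≤ ‖g‖ := by
    intro g
    refine ContinuousLinearMap.opNorm_le_bound _ (norm_nonneg g) fun z => ?_
    simpa using g.le_opNorm (z : X)
  let Rlin : (X →L[ℝ] ℝ) →ₗ[ℝ] (↥Y →L[ℝ] ℝ) :=
    { toFun := fun g => g.comp Y.subtypeL
      map_add' := fun a b => by simp [ContinuousLinearMap.add_comp]
      map_smul' := fun c a => by simp [ContinuousLinearMap.smul_comp] }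
  let R : (X →L[ℝ] ℝ) →L[ℝ] (↥Y →L[ℝ] ℝ) :=
    { Rlin with cont := AddMonoidHomClass.continuous_of_bound Rlin 1 fun g => (le_of_le_of_eq (hsub g) (one_mul _).symm) }
  have hRapp : ∀ g : X →L[ℝ] ℝ, R g = g.comp Y.subtypeL := fun g => by ext z; rfl
  let Ψ : (X →L[ℝ] ℝ) →L[ℝ] ℝ := ψ.comp R
  obtain ⟨x, hx⟩ := hrefl Ψ
  have hx' : ∀ g : X →L[ℝ] ℝ, g x = ψ (g.comp Y.subtypeL) := by
    intro g
    have := ContinuousLinearMap.ext_iff.1 hx g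
    simpa [Ψ, hRapp, NormedSpace.inclusionInDoubleDual] using this
  have hxY : x ∈ Y := by
    by_contra hmem
    obtain ⟨g, hg0, hgx⟩ := exists_dual_annihilator Y hY hmem
    have hcomp : g.comp Y.subtypeL = 0 := by
      ext z; simpa using hg0 (z : X) z.2
    have := hx' g
    rw [hcomp, map_zero] at this
    exact hgx this
  refine ⟨⟨x, hxY⟩, fun h => ?_⟩
  obtain ⟨g, hg, -⟩ := exists_extension_norm_eq Y h
  have hRg : g.comp Y.subtypeL = h := by
    ext z; simpa using hg z
  calc ψ h = ψ (g.comp Y.subtypeL) := by rw [hRg]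
    _ = g x := (hx' g).symm
    _ = h ⟨x, hxY⟩ := hg ⟨x, hxY⟩

/-- Weak sequential compactness of bounded sequences in a reflexive space. -/
lemma exists_weak_subseq (hrefl : IsReflexiveSpace X) (w : ℕ → X) (M : ℝ)
    (hM : ∀ j, ‖w j‖ ≤ M) :
    ∃ ψ : ℕ → ℕ, StrictMono ψ ∧ ∃ v : X, ∀ g : X →L[ℝ] ℝ,
      Tendsto (fun i => g (w (ψ i))) atTop (𝓝 (g v)) := by
  classical
  set Y : Submodule ℝ X := (Submodule.span ℝ (Set.range w)).topologicalClosure with hYdef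
  have hYc : IsClosed (Y : Set X) := Submodule.isClosed_topologicalClosure _
  have hmemY : ∀ j, w j ∈ Y := fun j =>
    (Submodule.span ℝ (Set.range w)).le_topologicalClosure
      (Submodule.subset_span (Set.mem_range_self j))
  set w' : ℕ → ↥Y := fun j => ⟨w j, hmemY j⟩ with hw'def
  set M' : ℝ := max M 0 with hM'def
  have hM'0 : 0 ≤ M' := le_max_right _ _
  have hMw' : ∀ j, ‖w' j‖ ≤ M' := fun j => by
    show ‖w j‖ ≤ M'
    exact (hM j).trans (le_max_left M 0)
  -- the subspace Y is separable
  have hsepY : SeparableSpace ↥Y := by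
    have : IsSeparable (Y : Set X) := by
      rw [hYdef, Submodule.topologicalClosure_coe]
      exact ((Set.countable_range w).isSeparable.span).closure
    exact this.separableSpace
  -- the double dual of Y is separable, since Y is reflexive
  have hsurj : Function.Surjective (NormedSpace.inclusionInDoubleDual ℝ ↥Y) := by
    intro ψ
    obtain ⟨v, hv⟩ := exists_repr_of_reflexive hrefl Y hYc ψ
    exact ⟨v, by ext h; exact (hv h).symm⟩
  have hsepYdd : SeparableSpace ((↥Y →L[ℝ] ℝ) →L[ℝ] ℝ) :=
    (hsurj.denseRange.separableSpace) (NormedSpace.inclusionInDoubleDual ℝ ↥Y).continuous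
  -- hence the dual of Y is separable
  have hsepYd : SeparableSpace (↥Y →L[ℝ] ℝ) :=
    separableSpace_of_dual_separableSpace (X := ↥Y →L[ℝ] ℝ) hsepYdd
  obtain ⟨h, hdense⟩ := @TopologicalSpace.exists_dense_seq (↥Y →L[ℝ] ℝ) _ hsepYd ⟨0⟩
  -- diagonal extraction via compactness of a product of intervals
  set s : Set (ℕ → ℝ) := Set.univ.pi fun n => Set.Icc (-(‖h n‖ * M')) (‖h n‖ * M') with hsdef
  have hscomp : IsCompact s := isCompact_univ_pi fun n => isCompact_Icc
  have hFs : ∀ k, (fun n => h n (w' k)) ∈ s := by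
    intro k n _
    have hb : ‖h n (w' k)‖ ≤ ‖h n‖ * M' :=
      (h n).le_opNorm (w' k) |>.trans
        (mul_le_mul_of_nonneg_left (hMw' k) (norm_nonneg _))
    rw [Real.norm_eq_abs, abs_le] at hb
    exact ⟨hb.1, hb.2⟩
  obtain ⟨L, -, ψ, hψmono, hψtend⟩ := hscomp.tendsto_subseq hFs
  have hcomp : ∀ n, Tendsto (fun i => h n (w' (ψ i))) atTop (𝓝 (L n)) := by
    intro n
    have := tendsto_pi_nhds.1 hψtend n
    simpa using this
  -- every functional converges along the subsequence
  have hconv : ∀ φY : ↥Y →L[ℝ] ℝ, ∃ c : ℝ,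
      Tendsto (fun i => φY (w' (ψ i))) atTop (𝓝 c) := by
    intro φY
    have hcauchy : CauchySeq (fun i => φY (w' (ψ i))) := by
      rw [Metric.cauchySeq_iff]
      intro ep hep
      have hd : (0:ℝ) < ep / 3 / (M' + 1) := by positivity
      obtain ⟨n, hn⟩ := hdense.exists_dist_lt φY hd
      have hdn : dist φY (h n) = ‖φY - h n‖ := dist_eq_norm φY (h n)
      rw [hdn] at hn
      obtain ⟨N, hN⟩ := Metric.cauchySeq_iff.1 (hcomp n).cauchySeq (ep / 3) (by positivity)
      refine ⟨N, fun a ha b hb => ?_⟩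
      have key : ∀ i, |φY (w' (ψ i)) - h n (w' (ψ i))| ≤ ep / 3 := by
        intro i
        have h1 : ‖(φY - h n) (w' (ψ i))‖ ≤ ‖φY - h n‖ * M' :=
          ((φY - h n).le_opNorm _).trans
            (mul_le_mul_of_nonneg_left (hMw' _) (norm_nonneg _))
        have h2 : ‖φY - h n‖ ≤ ep / 3 / (M' + 1) := hn.le
        have h3 : ‖φY - h n‖ * M' ≤ ep / 3 / (M' + 1) * (M' + 1) := by
          apply mul_le_mul h2 (by linarith) hM'0 (by positivity)
        rw [div_mul_cancel₀ _ (by positivity : (M':ℝ) + 1 ≠ 0)] at h3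
        have : (φY - h n) (w' (ψ i)) = φY (w' (ψ i)) - h n (w' (ψ i)) := by simp
        rw [this, Real.norm_eq_abs] at h1
        linarith
      have hmid := hN a ha b hb
      rw [Real.dist_eq] at hmid ⊢
      have k1 := key a
      have k2 := key b
      have : |φY (w' (ψ a)) - φY (w' (ψ b))| ≤
          |φY (w' (ψ a)) - h n (w' (ψ a))| + |h n (w' (ψ a)) - h n (w' (ψ b))|
            + |h n (w' (ψ b)) - φY (w' (ψ b))| := by
        have := abs_sub_le (φY (w' (ψ a))) (h n (w' (ψ a))) (φY (w' (ψ b)))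
        have h4 := abs_sub_le (h n (w' (ψ a))) (h n (w' (ψ b))) (φY (w' (ψ b)))
        linarith
      have k2' : |h n (w' (ψ b)) - φY (w' (ψ b))| ≤ ep / 3 := by
        rw [abs_sub_comm]; exact k2
      linarith
    exact cauchySeq_tendsto_of_complete hcauchy
  choose ℓ hℓ using hconv
  -- the limit functional
  have hbound : ∀ φY : ↥Y →L[ℝ] ℝ, ‖ℓ φY‖ ≤ (M' + 1) * ‖φY‖ := by
    intro φY
    rw [Real.norm_eq_abs]
    refine le_of_tendsto (hℓ φY).abs (Filter.Eventually.of_forall fun i => ?_)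
    have := (φY.le_opNorm (w' (ψ i))).trans
      (mul_le_mul_of_nonneg_left (hMw' _) (norm_nonneg _))
    rw [Real.norm_eq_abs] at this
    calc |φY (w' (ψ i))| ≤ ‖φY‖ * M' := this
      _ ≤ (M' + 1) * ‖φY‖ := by nlinarith [norm_nonneg φY]
  let Ψlin : (↥Y →L[ℝ] ℝ) →ₗ[ℝ] ℝ :=
    { toFun := ℓ
      map_add' := fun a b => tendsto_nhds_unique (hℓ (a + b))
        (by simpa using ((hℓ a).add (hℓ b)))
      map_smul' := fun c a => tendsto_nhds_unique (hℓ (c • a))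
        (by simpa [smul_eq_mul] using ((hℓ a).const_mul c)) }
  let Ψ : (↥Y →L[ℝ] ℝ) →L[ℝ] ℝ :=
    { Ψlin with cont := AddMonoidHomClass.continuous_of_bound Ψlin (M' + 1) hbound }
  obtain ⟨v, hv⟩ := exists_repr_of_reflexive hrefl Y hYc Ψ
  refine ⟨ψ, hψmono, (v : X), fun g => ?_⟩
  have hgY := hℓ (g.comp Y.subtypeL)
  have hval : ℓ (g.comp Y.subtypeL) = g (v : X) := by
    have := hv (g.comp Y.subtypeL)
    simpa [Ψ, Ψlin] using this
  rw [← hval]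
  exact hgY

end AuxiliaryLemmas

/-- in a reflexive Banach space, the TAN estimate holds for every
weak contingent direction, every Fréchet normal to the weak contingent cone, and
every defining sequence. -/
theorem tangential_approximate_normality_reflexive
    [CompleteSpace X] (hrefl : IsReflexiveSpace X) (Ω : Set X) (x₀ : X) (hx₀ : x₀ ∈ Ω)
    (d : X) (hd : d ∈ weakContingentCone x₀ Ω) (f : X →L[ℝ] ℝ)
    (hf : IsFrechetNormal f (weakContingentCone x₀ Ω) d)
    (t : ℕ → ℝ) (x : ℕ → X) (ht : ∀ k, 0 < t k) (ht0 : Tendsto t atTop (𝓝 0))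
    (hxΩ : ∀ k, x k ∈ Ω)
    (hweak : ∀ g : X →L[ℝ] ℝ, Tendsto (fun k => g ((t k)⁻¹ • (x k - x₀))) atTop (𝓝 (g d)))
    (ε : ℝ) (hε : 0 < ε) :
    ∃ δ : ℝ, 0 < δ ∧ δ < ε ∧
      Filter.limsup (fun k =>
        sSup ((fun z => f (z - x k) / t k) '' (Ω ∩ closedBall (x k) (t k * δ))))
        atTop ≤ 2 * ε * δ := by
  classical
  set q : ℕ → X := fun k => (t k)⁻¹ • (x k - x₀) with hqdef
  -- uniform bound on the weakly convergent sequence `q` (Banach–Steinhaus)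
  have hqb : ∃ C : ℝ, 0 ≤ C ∧ ∀ k, ‖q k‖ ≤ C := by
    have hpt : ∀ g : X →L[ℝ] ℝ, ∃ C, ∀ k : ℕ,
        ‖(NormedSpace.inclusionInDoubleDual ℝ X (q k)) g‖ ≤ C := by
      intro g
      obtain ⟨C, hC⟩ := (hweak g).norm.bddAbove_range
      exact ⟨C, fun k => hC (Set.mem_range_self k)⟩
    obtain ⟨C', hC'⟩ := banach_steinhaus hpt
    refine ⟨max C' 0, le_max_right _ _, fun k => ?_⟩
    refine NormedSpace.norm_le_dual_bound ℝ (q k) (le_max_right _ _) fun g => ?_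
    calc ‖g (q k)‖ = ‖(NormedSpace.inclusionInDoubleDual ℝ X (q k)) g‖ := rfl
      _ ≤ ‖NormedSpace.inclusionInDoubleDual ℝ X (q k)‖ * ‖g‖ :=
          (NormedSpace.inclusionInDoubleDual ℝ X (q k)).le_opNorm g
      _ ≤ max C' 0 * ‖g‖ :=
          mul_le_mul_of_nonneg_right ((hC' k).trans (le_max_left _ _)) (norm_nonneg g)
  obtain ⟨δ', hδ'pos, hδ'⟩ := hf ε hε
  set δ : ℝ := min (ε / 2) (δ' / 2) with hδdef
  have hδpos : 0 < δ := lt_min (by linarith) (by linarith)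
  have hδε : δ < ε := (min_le_left _ _).trans_lt (by linarith)
  have hδδ' : δ < δ' := (min_le_right _ _).trans_lt (by linarith)
  refine ⟨δ, hδpos, hδε, ?_⟩
  by_contra hcon
  rw [not_le] at hcon
  set u : ℕ → ℝ := fun k =>
    sSup ((fun z => f (z - x k) / t k) '' (Ω ∩ closedBall (x k) (t k * δ))) with hudef
  have hmemself : ∀ k, (0:ℝ) ∈
      (fun z => f (z - x k) / t k) '' (Ω ∩ closedBall (x k) (t k * δ)) := by
    intro k
    refine ⟨x k, ⟨hxΩ k, Metric.mem_closedBall_self (mul_nonneg (ht k).le hδpos.le)⟩, by simp⟩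
  have hbdd : ∀ k, ∀ a ∈ (fun z => f (z - x k) / t k) ''
      (Ω ∩ closedBall (x k) (t k * δ)), a ≤ ‖f‖ * δ := by
    rintro k a ⟨zz, ⟨hz1, hz2⟩, rfl⟩
    rw [Metric.mem_closedBall, dist_eq_norm] at hz2
    have h1 : f (zz - x k) ≤ ‖f‖ * (t k * δ) := by
      calc f (zz - x k) ≤ |f (zz - x k)| := le_abs_self _
        _ ≤ ‖f‖ * ‖zz - x k‖ := f.le_opNorm _
        _ ≤ ‖f‖ * (t k * δ) := mul_le_mul_of_nonneg_left hz2 (norm_nonneg f)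
    rw [div_le_iff₀ (ht k)]
    calc f (zz - x k) ≤ ‖f‖ * (t k * δ) := h1
      _ = ‖f‖ * δ * t k := by ring
  have hu0 : ∀ k, 0 ≤ u k := fun k =>
    le_csSup ⟨‖f‖ * δ, fun a ha => hbdd k a ha⟩ (hmemself k)
  have hcob : Filter.IsCoboundedUnder (· ≤ ·) atTop u := by
    have hb : Filter.IsBoundedUnder (· ≥ ·) atTop u :=
      ⟨0, Filter.eventually_map.2 (Filter.Eventually.of_forall hu0)⟩
    exact hb.isCoboundedUnder_le
  have hfreq : ∃ᶠ k in atTop, 2 * ε * δ < u k := frequently_lt_of_lt_limsup hcob hcon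
  obtain ⟨φ, hφm, hφP⟩ := Filter.extraction_of_frequently_atTop hfreq
  have hzex : ∀ j, ∃ zz : X, zz ∈ Ω ∧ ‖zz - x (φ j)‖ ≤ t (φ j) * δ ∧
      2 * ε * δ < f (zz - x (φ j)) / t (φ j) := by
    intro j
    obtain ⟨a, ⟨zz, ⟨hz1, hz2⟩, rfl⟩, ha⟩ :=
      exists_lt_of_lt_csSup ⟨0, hmemself (φ j)⟩ (hφP j)
    rw [Metric.mem_closedBall, dist_eq_norm] at hz2
    exact ⟨zz, hz1, hz2, ha⟩
  choose z hzΩ hznorm hzval using hzex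
  have hsmall : ∀ j, ‖(t (φ j))⁻¹ • (z j - x (φ j))‖ ≤ δ := by
    intro j
    rw [norm_smul, Real.norm_eq_abs, abs_inv, abs_of_pos (ht _), inv_mul_le_iff₀ (ht _)]
    calc ‖z j - x (φ j)‖ ≤ t (φ j) * δ := hznorm j
      _ = t (φ j) * δ := rfl
  set W : ℕ → X := fun j => q (φ j) + (t (φ j))⁻¹ • (z j - x (φ j)) with hWdef
  obtain ⟨C, hC0, hCq⟩ := hqb
  have hWb : ∀ j, ‖W j‖ ≤ C + δ := by
    intro j
    calc ‖W j‖ ≤ ‖q (φ j)‖ + ‖(t (φ j))⁻¹ • (z j - x (φ j))‖ := norm_add_le _ _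
      _ ≤ C + δ := add_le_add (hCq _) (hsmall j)
  obtain ⟨ψk, hψm, v, hv⟩ := exists_weak_subseq hrefl W (C + δ) hWb
  have hmono : StrictMono (fun i => φ (ψk i)) := hφm.comp hψm
  have httend : Tendsto (fun i => t (φ (ψk i))) atTop (𝓝 0) :=
    ht0.comp hmono.tendsto_atTop
  have hqtend : ∀ g : X →L[ℝ] ℝ,
      Tendsto (fun i => g (q (φ (ψk i)))) atTop (𝓝 (g d)) :=
    fun g => (hweak g).comp hmono.tendsto_atTop
  -- the weak limit belongs to the weak contingent cone
  have hvcone : v ∈ weakContingentCone x₀ Ω := by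
    refine ⟨fun i => t (φ (ψk i)), fun i => W (ψk i), fun i => ht _, httend,
      fun g => hv g, ?_⟩
    intro i
    have htne : t (φ (ψk i)) ≠ 0 := (ht _).ne'
    have hteq : x₀ + t (φ (ψk i)) • W (ψk i) = z (ψk i) := by
      simp only [hWdef, hqdef]
      rw [smul_add, smul_smul, mul_inv_cancel₀ htne, one_smul, smul_smul,
        mul_inv_cancel₀ htne, one_smul]
      abel
    rw [hteq]
    exact hzΩ _
  -- difference estimates
  have hdiff : ∀ (g : X →L[ℝ] ℝ) i,
      g (W (ψk i)) - g (q (φ (ψk i))) = g ((t (φ (ψk i)))⁻¹ • (z (ψk i) - x (φ (ψk i)))) := by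
    intro g i
    simp only [hWdef, map_add]
    ring
  have hvd : ‖v - d‖ ≤ δ := by
    by_cases hvd0 : v - d = 0
    · rw [hvd0, norm_zero]; exact hδpos.le
    · obtain ⟨g, hg1, hg2⟩ := exists_dual_vector ℝ (v - d) (norm_ne_zero_iff.2 hvd0)
      have hg2' : g (v - d) = ‖v - d‖ := by exact_mod_cast hg2
      have hlim : Tendsto (fun i => g (W (ψk i)) - g (q (φ (ψk i)))) atTop
          (𝓝 (g v - g d)) := (hv g).sub (hqtend g)
      have hle : g v - g d ≤ δ := by
        refine le_of_tendsto hlim (Filter.Eventually.of_forall fun i => ?_)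
        rw [hdiff g i]
        calc g ((t (φ (ψk i)))⁻¹ • (z (ψk i) - x (φ (ψk i))))
            ≤ |g ((t (φ (ψk i)))⁻¹ • (z (ψk i) - x (φ (ψk i))))| := le_abs_self _
          _ ≤ ‖g‖ * ‖(t (φ (ψk i)))⁻¹ • (z (ψk i) - x (φ (ψk i)))‖ := g.le_opNorm _
          _ ≤ 1 * δ := by
              apply mul_le_mul hg1.le (hsmall (ψk i)) (norm_nonneg _) zero_le_one
          _ = δ := one_mul δ
      calc ‖v - d‖ = g (v - d) := hg2'.symm
        _ = g v - g d := map_sub g v d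
        _ ≤ δ := hle
  have hfvd : f (v - d) ≤ ε * δ := by
    have h1 := hδ' v hvcone (lt_of_le_of_lt hvd hδδ')
    calc f (v - d) ≤ (0 + ε) * ‖v - d‖ := h1
      _ = ε * ‖v - d‖ := by ring
      _ ≤ ε * δ := mul_le_mul_of_nonneg_left hvd hε.le
  have hlow : 2 * ε * δ ≤ f v - f d := by
    have hlim : Tendsto (fun i => f (W (ψk i)) - f (q (φ (ψk i)))) atTop
        (𝓝 (f v - f d)) := (hv f).sub (hqtend f)
    refine ge_of_tendsto hlim (Filter.Eventually.of_forall fun i => ?_)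
    have heq : f (W (ψk i)) - f (q (φ (ψk i)))
        = f (z (ψk i) - x (φ (ψk i))) / t (φ (ψk i)) := by
      rw [hdiff f i, map_smul, smul_eq_mul, div_eq_inv_mul]
    rw [heq]
    exact (hzval (ψk i)).le
  have hsub : f (v - d) = f v - f d := map_sub f v d
  nlinarith [mul_pos hε hδpos]
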